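/- For the symmetric-elimination function G(a_t) = Σ over a_{t+1},...,a_p,a_0 of (a_0/2)·⟨a_t|e^{iβ_t X}|a_{t+1}⟩·⟨a_{t+1}|e^{−iβ_t X}|−a_t⟩·∏_{k=t+1}^{p−1} |⟨a_k|e^{iβ_{k+1}X}|a_{k+1}⟩|²·|⟨a_p|e^{iβ_p X}|a_0⟩|², one has G(a_t) = −(a_t/2)·i·sin(2β_t)·cos(2β_{t+1})···cos(2β_p), for a_t ∈ {−1,1}. -/

import Mathlib

open Finset

/-- Matrix element `⟨a| e^{iβX} |b⟩` for `a, b ∈ {−1,1}` (encoded as `Bool`). -/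
noncomputable def mixAmp (β : ℝ) (a b : Bool) : ℂ :=
  if a = b then (Real.cos β : ℂ) else Complex.I * (Real.sin β : ℂ)

/-- The spin value `±1` of a boolean. -/
def sgn (b : Bool) : ℝ := if b then 1 else -1

/-- The symmetric-elimination function
`G(a_t) = Σ_{a_{t+1},…,a_p,a_0} (a_0/2)·⟨a_t|e^{iβ_t X}|a_{t+1}⟩·⟨a_{t+1}|e^{−iβ_t X}|−a_t⟩
·∏ |⟨a_k|e^{iβ_k X}|a_{k+1}⟩|²·|⟨a_p|e^{iβ_p X}|a_0⟩|²`, where the summed chain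
`(a_{t+1},…,a_p,a_0)` is encoded as `a : Fin (p−t+1) → Bool` with `a_0` in last
position. -/
noncomputable def Gelim (p t : ℕ) (β : ℕ → ℝ) (at_ : Bool) : ℂ :=
  ∑ a : Fin (p - t + 1) → Bool,
    ((sgn (a (Fin.last (p - t))) / 2 : ℝ) : ℂ) *
      mixAmp (β t) at_ (a 0) * mixAmp (-(β t)) (a 0) (!at_) *
      ∏ j : Fin (p - t),
        ((‖mixAmp (β (t + 1 + (j : ℕ))) (a j.castSucc) (a j.succ)‖ ^ 2 : ℝ) : ℂ)


lemma key (β : ℝ) (x : Bool) :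
    ∑ b : Bool, ((sgn b / 2 : ℝ) : ℂ) * ((‖mixAmp β x b‖ ^ 2 : ℝ) : ℂ)
      = ((sgn x / 2 : ℝ) : ℂ) * ((Real.cos (2 * β) : ℝ) : ℂ) := by
  have h : Real.cos (2 * β) = Real.cos β ^ 2 - Real.sin β ^ 2 := by rw [Real.cos_two_mul]; nlinarith [Real.sin_sq_add_cos_sq β]
  cases x <;>
  · simp only [Fintype.sum_bool, mixAmp, sgn, if_true, if_false, Bool.true_eq_false,
      Bool.false_eq_true, reduceIte, norm_mul, Complex.norm_real, Complex.norm_I, Real.norm_eq_abs, one_mul]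
    rw [h]
    push_cast [sq_abs]
    ring

lemma base (c : ℝ) (at_ : Bool) :
    ∑ b : Bool, ((sgn b / 2 : ℝ) : ℂ) * mixAmp c at_ b * mixAmp (-c) b (!at_)
      = -((sgn at_ / 2 : ℝ) : ℂ) * Complex.I * (Real.sin (2 * c) : ℂ) := by
  have h : Real.sin (2 * c) = 2 * Real.sin c * Real.cos c := Real.sin_two_mul c
  cases at_ <;>
  · simp only [Fintype.sum_bool, mixAmp, sgn, if_true, if_false, Bool.true_eq_false,
      Bool.false_eq_true, Bool.not_true, Bool.not_false, reduceIte, Real.cos_neg, Real.sin_neg]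
    rw [h]
    push_cast
    ring

lemma aux : ∀ (n : ℕ) (c : ℝ) (f : Fin n → ℝ) (at_ : Bool),
    (∑ a : Fin (n + 1) → Bool,
      ((sgn (a (Fin.last n)) / 2 : ℝ) : ℂ) *
        mixAmp c at_ (a 0) * mixAmp (-c) (a 0) (!at_) *
        ∏ j : Fin n,
          ((‖mixAmp (f j) (a j.castSucc) (a j.succ)‖ ^ 2 : ℝ) : ℂ))
    = -((sgn at_ / 2 : ℝ) : ℂ) * Complex.I * (Real.sin (2 * c) : ℂ) *
        ∏ j : Fin n, ((Real.cos (2 * f j) : ℝ) : ℂ) := by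
  intro n
  induction n with
  | zero =>
    intro c f at_
    rw [← (Equiv.funUnique (Fin 1) Bool).symm.sum_comp]
    simpa using base c at_
  | succ n ih =>
    intro c f at_
    rw [← (Fin.snocEquiv (fun _ => Bool)).sum_comp, Fintype.sum_prod_type]
    simp only [Fin.snocEquiv_apply]
    have step : ∀ g : Fin (n + 1) → Bool,
        (∑ b : Bool,
          ((sgn ((Fin.snoc g b : Fin (n + 2) → Bool) (Fin.last (n + 1))) / 2 : ℝ) : ℂ) *
            mixAmp c at_ ((Fin.snoc g b : Fin (n + 2) → Bool) 0) *
            mixAmp (-c) ((Fin.snoc g b : Fin (n + 2) → Bool) 0) (!at_) *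
            ∏ j : Fin (n + 1),
              ((‖mixAmp (f j) ((Fin.snoc g b : Fin (n + 2) → Bool) j.castSucc)
                ((Fin.snoc g b : Fin (n + 2) → Bool) j.succ)‖ ^ 2 : ℝ) : ℂ))
        = ((Real.cos (2 * f (Fin.last n)) : ℝ) : ℂ) *
            (((sgn (g (Fin.last n)) / 2 : ℝ) : ℂ) *
              mixAmp c at_ (g 0) * mixAmp (-c) (g 0) (!at_) *
              ∏ j : Fin n,
                ((‖mixAmp (f j.castSucc) (g j.castSucc) (g j.succ)‖ ^ 2 : ℝ) : ℂ)) := by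
      intro g
      have h0 : ∀ b : Bool, (Fin.snoc g b : Fin (n + 2) → Bool) 0 = g 0 := by
        intro b
        rw [← Fin.castSucc_zero, Fin.snoc_castSucc]
      have hprod : ∀ b : Bool,
          (∏ j : Fin (n + 1),
            ((‖mixAmp (f j) ((Fin.snoc g b : Fin (n + 2) → Bool) j.castSucc)
              ((Fin.snoc g b : Fin (n + 2) → Bool) j.succ)‖ ^ 2 : ℝ) : ℂ))
          = (∏ j : Fin n,
              ((‖mixAmp (f j.castSucc) (g j.castSucc) (g j.succ)‖ ^ 2 : ℝ) : ℂ)) *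
            ((‖mixAmp (f (Fin.last n)) (g (Fin.last n)) b‖ ^ 2 : ℝ) : ℂ) := by
        intro b
        rw [Fin.prod_univ_castSucc]
        congr 1
        · refine Finset.prod_congr rfl fun j _ => ?_
          rw [Fin.succ_castSucc, Fin.snoc_castSucc, Fin.snoc_castSucc]
        · rw [Fin.succ_last, Fin.snoc_last, Fin.snoc_castSucc]
      have hlast : ∀ b : Bool, (Fin.snoc g b : Fin (n + 2) → Bool) (Fin.last (n + 1)) = b := by
        intro b; exact Fin.snoc_last ..
      simp only [h0, hprod, hlast]
      have hk := key (f (Fin.last n)) (g (Fin.last n))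
      calc ∑ b : Bool, ((sgn b / 2 : ℝ) : ℂ) * mixAmp c at_ (g 0) * mixAmp (-c) (g 0) (!at_) *
            ((∏ j : Fin n,
              ((‖mixAmp (f j.castSucc) (g j.castSucc) (g j.succ)‖ ^ 2 : ℝ) : ℂ)) *
              ((‖mixAmp (f (Fin.last n)) (g (Fin.last n)) b‖ ^ 2 : ℝ) : ℂ))
          = (mixAmp c at_ (g 0) * mixAmp (-c) (g 0) (!at_) *
              ∏ j : Fin n,
                ((‖mixAmp (f j.castSucc) (g j.castSucc) (g j.succ)‖ ^ 2 : ℝ) : ℂ)) *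
            ∑ b : Bool, ((sgn b / 2 : ℝ) : ℂ) *
              ((‖mixAmp (f (Fin.last n)) (g (Fin.last n)) b‖ ^ 2 : ℝ) : ℂ) := by
            rw [Finset.mul_sum]; exact Finset.sum_congr rfl fun b _ => by ring
        _ = _ := by rw [hk]; ring
    rw [Finset.sum_comm, Finset.sum_congr rfl fun g _ => step g, ← Finset.mul_sum, ih c (fun j => f j.castSucc) at_,
      Fin.prod_univ_castSucc]
    ring

/-- `G(a_t) = −(a_t/2)·i·sin(2β_t)·cos(2β_{t+1})⋯cos(2β_p)` for `a_t ∈ {−1,1}`. -/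
theorem Gelim_eval (p t : ℕ) (ht : t ≤ p) (β : ℕ → ℝ) (at_ : Bool) :
    Gelim p t β at_ =
      -((sgn at_ / 2 : ℝ) : ℂ) * Complex.I * (Real.sin (2 * β t) : ℂ) *
        ∏ j : Fin (p - t), ((Real.cos (2 * β (t + 1 + (j : ℕ))) : ℝ) : ℂ) := by
  exact aux (p - t) (β t) (fun j => β (t + 1 + (j : ℕ))) at_
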